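/- Let μ ∈ 𝒫_p(ℝ) be an atomless probability measure with median x_μ = X_μ(1/2) = 0, let ε ∈ (0,1/2), let I_ε := [X_μ(ε), X_μ(1−ε)], and let C_ε μ := (1−2ε)^{-1} μ restricted to I_ε. Then W_p(μ, C_ε μ)^p ≤ ∫_{I_ε^c} |x|^p dμ(x). -/

import Mathlib

open Set MeasureTheory
open scoped ENNReal NNReal

/-- Quantile function of a probability measure on `ℝ`. -/
noncomputable def quantile (μ : Measure ℝ) (z : ℝ) : ℝ :=
  sInf {a : ℝ | z < (μ (Iio a)).toReal}

/-- The `p`-Wasserstein transport cost `W_p(μ,ν)^p`. -/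
noncomputable def WpCost (p : ℝ) (μ ν : Measure ℝ) : ℝ≥0∞ :=
  sInf {c | ∃ π : Measure (ℝ × ℝ), IsProbabilityMeasure π ∧
    π.map Prod.fst = μ ∧ π.map Prod.snd = ν ∧
    c = ∫⁻ q, ENNReal.ofReal (|q.1 - q.2| ^ p) ∂π}

/-- The compactification `C_ε μ = (1-2ε)⁻¹ μ|_{I_ε}` with
`I_ε = [X_μ(ε), X_μ(1-ε)]`. -/
noncomputable def compactify (ε : ℝ) (μ : Measure ℝ) : Measure ℝ :=
  (ENNReal.ofReal (1 - 2 * ε))⁻¹ • μ.restrict (Icc (quantile μ ε) (quantile μ (1 - ε)))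

section QuantileFacts

open Filter Topology

lemma quantile_mem_iff (μ : Measure ℝ) [IsProbabilityMeasure μ] {z a : ℝ} (hz : 0 ≤ z) :
    a ∈ {a : ℝ | z < (μ (Iio a)).toReal} ↔ ENNReal.ofReal z < μ (Iio a) := by
  simp only [mem_setOf_eq]
  rw [ENNReal.ofReal_lt_iff_lt_toReal hz (measure_ne_top μ _)]

lemma quantile_S_nonempty (μ : Measure ℝ) [IsProbabilityMeasure μ] {z : ℝ} (h0 : 0 ≤ z)
    (h1 : z < 1) : {a : ℝ | z < (μ (Iio a)).toReal}.Nonempty := by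
  have h : Tendsto (fun x => μ (Iic x)) atTop (𝓝 (μ univ)) := tendsto_measure_Iic_atTop μ
  rw [measure_univ] at h
  have hz : ENNReal.ofReal z < 1 := by
    rw [← ENNReal.ofReal_one]
    exact ENNReal.ofReal_lt_ofReal_iff_of_nonneg h0 |>.mpr h1
  have := h.eventually (eventually_gt_nhds hz)
  obtain ⟨x, hx⟩ := this.exists
  refine ⟨x + 1, ?_⟩
  rw [quantile_mem_iff μ h0]
  refine lt_of_lt_of_le hx (measure_mono (fun y hy => ?_))
  simp only [mem_Iic] at hy
  exact mem_Iio.2 (by linarith)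

lemma quantile_S_lowerbound (μ : Measure ℝ) [IsProbabilityMeasure μ] {z : ℝ} (h0 : 0 < z) :
    ∃ b : ℝ, μ (Iic b) < ENNReal.ofReal z ∧ b ∈ lowerBounds {a : ℝ | z < (μ (Iio a)).toReal} := by
  have h : Tendsto (fun n : ℕ => μ (Iic (-(n:ℝ)))) atTop (𝓝 (μ (⋂ n : ℕ, Iic (-(n:ℝ))))) := by
    refine tendsto_measure_iInter_atTop (fun n => (measurableSet_Iic).nullMeasurableSet)
      (fun m n hmn => Iic_subset_Iic.2 (by simpa using (Nat.cast_le (α := ℝ)).2 hmn)) ⟨0, measure_ne_top μ _⟩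
  have hempty : (⋂ n : ℕ, Iic (-(n:ℝ))) = ∅ := by
    ext x
    simp only [mem_iInter, mem_Iic, mem_empty_iff_false, iff_false, not_forall]
    obtain ⟨n, hn⟩ := exists_nat_gt (-x)
    exact ⟨n, by push_neg; linarith⟩
  rw [hempty, measure_empty] at h
  have hz : (0:ℝ≥0∞) < ENNReal.ofReal z := ENNReal.ofReal_pos.2 h0
  obtain ⟨n, hn⟩ := (h.eventually (eventually_lt_nhds hz)).exists
  refine ⟨-(n:ℝ), hn, fun a ha => ?_⟩
  rw [quantile_mem_iff μ h0.le] at ha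
  by_contra hab
  push_neg at hab
  exact absurd (lt_of_lt_of_le ha (measure_mono ((Iio_subset_Iio hab.le).trans Iio_subset_Iic_self)))
    (not_lt.2 hn.le)

lemma quantile_S_bddBelow (μ : Measure ℝ) [IsProbabilityMeasure μ] {z : ℝ} (h0 : 0 < z) :
    BddBelow {a : ℝ | z < (μ (Iio a)).toReal} := by
  obtain ⟨b, _, hb⟩ := quantile_S_lowerbound μ h0
  exact ⟨b, hb⟩

lemma measure_Iio_quantile (μ : Measure ℝ) [IsProbabilityMeasure μ] [NullSingletonClass μ] {z : ℝ}
    (h0 : 0 < z) (h1 : z < 1) : μ (Iio (quantile μ z)) = ENNReal.ofReal z := by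
  set S := {a : ℝ | z < (μ (Iio a)).toReal} with hS
  set q := quantile μ z with hq
  have hbdd := quantile_S_bddBelow μ h0
  have hne := quantile_S_nonempty μ h0.le h1
  -- upper bound
  have hub : μ (Iio q) ≤ ENNReal.ofReal z := by
    have hmono : Monotone (fun n : ℕ => Iio (q - 1/(n+1))) := by
      intro m n hmn
      apply Iio_subset_Iio
      have : (1:ℝ)/(n+1) ≤ 1/(m+1) := by
        apply one_div_le_one_div_of_le (by positivity)
        have : (m:ℝ) ≤ n := Nat.cast_le.2 hmn; linarith
      linarith
    have hUnion : (⋃ n : ℕ, Iio (q - 1/(n+1))) = Iio q := by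
      ext x
      simp only [mem_iUnion, mem_Iio]
      constructor
      · rintro ⟨n, hn⟩
        have : (0:ℝ) < 1/(n+1) := by positivity
        linarith
      · intro hx
        obtain ⟨n, hn⟩ := exists_nat_one_div_lt (show (0:ℝ) < q - x by linarith)
        exact ⟨n, by linarith⟩
    have htendsto : Tendsto (fun n : ℕ => μ (Iio (q - 1/(n+1)))) atTop (𝓝 (μ (Iio q))) := by
      rw [← hUnion]
      exact tendsto_measure_iUnion_atTop hmono
    refine le_of_tendsto htendsto (Eventually.of_forall fun n => ?_)
    by_contra hlt
    push_neg at hlt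
    have hmem : q - 1/(n+1) ∈ S := (quantile_mem_iff μ h0.le).2 hlt
    have : q ≤ q - 1/(n+1) := csInf_le hbdd hmem
    have hpos : (0:ℝ) < 1/(n+1) := by positivity
    linarith
  -- lower bound
  have hlb : ENNReal.ofReal z ≤ μ (Iic q) := by
    have hAnti : Antitone (fun n : ℕ => Iic (q + 1/(n+1))) := by
      intro m n hmn
      apply Iic_subset_Iic.2
      have : (1:ℝ)/(n+1) ≤ 1/(m+1) := by
        apply one_div_le_one_div_of_le (by positivity)
        have : (m:ℝ) ≤ n := Nat.cast_le.2 hmn; linarith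
      linarith
    have hInter : (⋂ n : ℕ, Iic (q + 1/(n+1))) = Iic q := by
      ext x
      simp only [mem_iInter, mem_Iic]
      constructor
      · intro h
        by_contra hx
        push_neg at hx
        obtain ⟨n, hn⟩ := exists_nat_one_div_lt (show (0:ℝ) < x - q by linarith)
        have := h n; linarith
      · intro hx n
        have : (0:ℝ) < 1/(n+1) := by positivity
        linarith
    have htendsto : Tendsto (fun n : ℕ => μ (Iic (q + 1/(n+1)))) atTop (𝓝 (μ (Iic q))) := by
      rw [← hInter]
      exact tendsto_measure_iInter_atTop (fun n => measurableSet_Iic.nullMeasurableSet) hAnti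
        ⟨0, measure_ne_top μ _⟩
    refine ge_of_tendsto htendsto (Eventually.of_forall fun n => ?_)
    have hpos : (0:ℝ) < 1/(n+1) := by positivity
    have hqlt : q < q + 1/(n+1) := by linarith
    obtain ⟨s, hsS, hs⟩ := exists_lt_of_csInf_lt hne hqlt
    have := (quantile_mem_iff μ h0.le).1 hsS
    exact le_trans this.le (measure_mono ((Iio_subset_Iio hs.le).trans Iio_subset_Iic_self))
  rw [measure_congr (Iio_ae_eq_Iic (a := q) (μ := μ))]
  exact le_antisymm (le_of_eq_of_le (measure_congr (Iio_ae_eq_Iic).symm) hub) hlb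

lemma quantile_mono' (μ : Measure ℝ) [IsProbabilityMeasure μ] {z₁ z₂ : ℝ} (h0 : 0 < z₁)
    (hz : z₁ ≤ z₂) (h1 : z₂ < 1) : quantile μ z₁ ≤ quantile μ z₂ := by
  apply csInf_le_csInf (quantile_S_bddBelow μ h0) (quantile_S_nonempty μ (h0.le.trans hz) h1)
  intro a ha
  exact lt_of_le_of_lt hz ha

end QuantileFacts

/-- For an atomless `μ ∈ 𝒫_p(ℝ)` with median `X_μ(1/2) = 0` and
`ε ∈ (0,1/2)`, one has `W_p(μ, C_ε μ)^p ≤ ∫_{I_ε^c} |x|^p dμ`. -/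
theorem compactification_error (p ε : ℝ) (hp : 1 ≤ p) (hε : ε ∈ Ioo (0:ℝ) (1/2))
    (μ : Measure ℝ) [IsProbabilityMeasure μ] [NullSingletonClass μ]
    (hmed : quantile μ (1/2) = 0)
    (hmom : (∫⁻ x, ENNReal.ofReal (|x| ^ p) ∂μ) < ⊤) :
    WpCost p μ (compactify ε μ)
      ≤ ∫⁻ x in (Icc (quantile μ ε) (quantile μ (1 - ε)))ᶜ, ENNReal.ofReal (|x| ^ p) ∂μ := by
  obtain ⟨hε0, hε2⟩ := hε
  set a := quantile μ ε with ha
  set b := quantile μ (1 - ε) with hb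
  have hε1 : ε < 1 := by linarith
  have h1ε0 : 0 < 1 - ε := by linarith
  have h1ε1 : 1 - ε < 1 := by linarith
  have hhalf : (0:ℝ) < 1/2 - ε := by linarith
  have hab : a ≤ b := quantile_mono' μ hε0 (by linarith) h1ε1
  have ha0 : a ≤ 0 := hmed ▸ quantile_mono' μ hε0 (by linarith) (by norm_num)
  have h0b : (0:ℝ) ≤ b := hmed ▸ quantile_mono' μ (by norm_num) (by linarith) h1ε1
  have hIa : μ (Iio a) = ENNReal.ofReal ε := measure_Iio_quantile μ hε0 hε1
  have hIb : μ (Iio b) = ENNReal.ofReal (1-ε) := measure_Iio_quantile μ h1ε0 h1ε1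
  have hI0 : μ (Iio (0:ℝ)) = ENNReal.ofReal (1/2) := by
    rw [← hmed]; exact measure_Iio_quantile μ (by norm_num) (by norm_num)
  have key : ∀ x y : ℝ, x ≤ y → μ (Icc x y) = μ (Iio y) - μ (Iio x) := by
    intro x y hxy
    rw [← measure_congr (Ico_ae_eq_Icc (a := x) (b := y) (μ := μ)), ← (show Iio y \ Iio x = Ico x y by
        ext z; simp only [mem_diff, mem_Iio, mem_Ico, not_lt]; tauto),
      measure_diff (Iio_subset_Iio hxy) measurableSet_Iio.nullMeasurableSet (measure_ne_top μ _)]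
  have hIcc : μ (Icc a b) = ENNReal.ofReal (1 - 2*ε) := by
    rw [key a b hab, hIa, hIb, ← ENNReal.ofReal_sub _ hε0.le]
    ring_nf
  have hL : μ (Icc a 0) = ENNReal.ofReal (1/2 - ε) := by
    rw [key a 0 ha0, hIa, hI0, ← ENNReal.ofReal_sub _ hε0.le]
  have hR : μ (Icc 0 b) = ENNReal.ofReal (1/2 - ε) := by
    rw [key 0 b h0b, hIb, hI0, ← ENNReal.ofReal_sub _ (by norm_num : (0:ℝ) ≤ 1/2)]
    ring_nf
  have hIoi : μ (Ioi b) = ENNReal.ofReal ε := by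
    rw [← compl_Iic, measure_compl measurableSet_Iic (measure_ne_top μ _), measure_univ,
      ← measure_congr (Iio_ae_eq_Iic (a := b) (μ := μ)), hIb, ← ENNReal.ofReal_one,
      ← ENNReal.ofReal_sub _ h1ε0.le]
    ring_nf
  set u := ENNReal.ofReal (1/2 - ε) with hu
  have hu0 : u ≠ 0 := (ENNReal.ofReal_pos.2 hhalf).ne'
  have huT : u ≠ ⊤ := ENNReal.ofReal_ne_top
  set νL : Measure ℝ := u⁻¹ • μ.restrict (Icc a 0) with hνLdef
  set νR : Measure ℝ := u⁻¹ • μ.restrict (Icc 0 b) with hνRdef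
  haveI hνL : IsProbabilityMeasure νL := by
    constructor
    rw [hνLdef, Measure.smul_apply, Measure.restrict_apply_univ, hL, smul_eq_mul,
      ENNReal.inv_mul_cancel hu0 huT]
  haveI hνR : IsProbabilityMeasure νR := by
    constructor
    rw [hνRdef, Measure.smul_apply, Measure.restrict_apply_univ, hR, smul_eq_mul,
      ENNReal.inv_mul_cancel hu0 huT]
  have hdiag : Measurable fun x : ℝ => (x, x) := measurable_id.prodMk measurable_id
  set π : Measure (ℝ × ℝ) := (μ.restrict (Icc a b)).map (fun x => (x, x)) +
    ((μ.restrict (Iio a)).prod νL + (μ.restrict (Ioi b)).prod νR) with hπdef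
  -- first marginal
  have hfst : π.map Prod.fst = μ := by
    rw [hπdef, Measure.map_add _ _ measurable_fst, Measure.map_add _ _ measurable_fst,
      Measure.map_map measurable_fst hdiag, Measure.map_fst_prod, Measure.map_fst_prod,
      measure_univ, measure_univ, one_smul, one_smul]
    have hid : (Prod.fst ∘ fun x : ℝ => (x, x)) = id := rfl
    rw [hid, Measure.map_id]
    have h1 : μ.restrict (Iio a) + μ.restrict (Icc a b) = μ.restrict (Iic b) := by
      rw [← Measure.restrict_union ?_ measurableSet_Icc, Iio_union_Icc_eq_Iic hab]
      rw [Set.disjoint_left]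
      intro x hx hx'
      exact absurd hx'.1 (not_le.2 hx)
    have h2 : μ.restrict (Iic b) + μ.restrict (Ioi b) = μ := by
      rw [← Measure.restrict_union ?_ measurableSet_Ioi, Iic_union_Ioi, Measure.restrict_univ]
      rw [Set.disjoint_left]
      intro x hx hx'
      exact absurd hx (show ¬ x ≤ b from not_le.2 hx')
    calc μ.restrict (Icc a b) + (μ.restrict (Iio a) + μ.restrict (Ioi b))
        = (μ.restrict (Iio a) + μ.restrict (Icc a b)) + μ.restrict (Ioi b) := by abel
      _ = μ.restrict (Iic b) + μ.restrict (Ioi b) := by rw [h1]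
      _ = μ := h2
  -- second marginal
  have harith : (1 : ℝ≥0∞) + ENNReal.ofReal ε * u⁻¹ = (ENNReal.ofReal (1 - 2*ε))⁻¹ := by
    have h2u : ENNReal.ofReal (1 - 2*ε) = ENNReal.ofReal 2 * u := by
      rw [hu, ← ENNReal.ofReal_mul (by norm_num : (0:ℝ) ≤ 2)]
      ring_nf
    have h2ne : ENNReal.ofReal 2 ≠ 0 := (ENNReal.ofReal_pos.2 (by norm_num)).ne'
    rw [h2u, ENNReal.mul_inv (Or.inl h2ne) (Or.inl ENNReal.ofReal_ne_top)]
    have hhalf2 : (ENNReal.ofReal 2)⁻¹ = ENNReal.ofReal (1/2) := by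
      rw [← ENNReal.ofReal_inv_of_pos (by norm_num : (0:ℝ) < 2)]
      norm_num
    rw [hhalf2]
    have hsum : ENNReal.ofReal (1/2) = u + ENNReal.ofReal ε := by
      rw [hu, ← ENNReal.ofReal_add hhalf.le hε0.le]
      ring_nf
    rw [hsum, add_mul, ENNReal.mul_inv_cancel hu0 huT, add_comm]
  have hsnd : π.map Prod.snd = compactify ε μ := by
    have hcomp : compactify ε μ = (ENNReal.ofReal (1 - 2*ε))⁻¹ • μ.restrict (Icc a b) := rfl
    rw [hπdef, Measure.map_add _ _ measurable_snd, Measure.map_add _ _ measurable_snd,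
      Measure.map_map measurable_snd hdiag, Measure.map_snd_prod, Measure.map_snd_prod]
    have hid : (Prod.snd ∘ fun x : ℝ => (x, x)) = id := rfl
    rw [hid, Measure.map_id, Measure.restrict_apply_univ, Measure.restrict_apply_univ,
      hIa, hIoi, hνLdef, hνRdef, smul_smul, smul_smul, ← smul_add]
    have hres : μ.restrict (Icc a 0) + μ.restrict (Icc 0 b) = μ.restrict (Icc a b) := by
      rw [show μ.restrict (Icc (0:ℝ) b) = μ.restrict (Ioc 0 b) from
          (Measure.restrict_congr_set (Ioc_ae_eq_Icc)).symm,
        ← Measure.restrict_union ?_ measurableSet_Ioc, Icc_union_Ioc_eq_Icc ha0 h0b]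
      rw [Set.disjoint_left]
      intro x hx hx'
      exact absurd hx.2 (not_le.2 hx'.1)
    rw [hres, hcomp, ← harith, add_smul, one_smul]
  -- π is a probability measure
  haveI hπprob : IsProbabilityMeasure π := by
    constructor
    have h := congrArg (fun m : Measure ℝ => m univ) hfst
    simp only [Measure.map_apply measurable_fst MeasurableSet.univ, preimage_univ] at h
    rw [h, measure_univ]
  -- cost estimate
  have hp0 : (0:ℝ) < p := lt_of_lt_of_le one_pos hp
  have hfmeas : Measurable fun q : ℝ × ℝ => ENNReal.ofReal (|q.1 - q.2| ^ p) :=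
    ((measurable_fst.sub measurable_snd).abs.pow measurable_const).ennreal_ofReal
  have hc1 : ∫⁻ q, ENNReal.ofReal (|q.1 - q.2| ^ p)
      ∂((μ.restrict (Icc a b)).map (fun x => (x, x))) = 0 := by
    rw [lintegral_map hfmeas hdiag]
    simp [sub_self, abs_zero, Real.zero_rpow hp0.ne']
  have hc2 : ∫⁻ q, ENNReal.ofReal (|q.1 - q.2| ^ p) ∂((μ.restrict (Iio a)).prod νL)
      ≤ ∫⁻ x in Iio a, ENNReal.ofReal (|x| ^ p) ∂μ := by
    rw [lintegral_prod _ hfmeas.aemeasurable]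
    refine lintegral_mono_ae ?_
    filter_upwards [ae_restrict_mem measurableSet_Iio] with x hx
    have hx0 : x < a := hx
    calc ∫⁻ y, ENNReal.ofReal (|x - y| ^ p) ∂νL
        ≤ ∫⁻ _, ENNReal.ofReal (|x| ^ p) ∂νL := by
          refine lintegral_mono_ae ?_
          have hy : ∀ᵐ y ∂νL, y ∈ Icc a (0:ℝ) := by
            rw [hνLdef]
            exact Measure.ae_smul_measure (ae_restrict_mem measurableSet_Icc) _
          filter_upwards [hy] with y hy
          refine ENNReal.ofReal_le_ofReal (Real.rpow_le_rpow (abs_nonneg _) ?_ hp0.le)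
          obtain ⟨hy1, hy2⟩ := hy
          rw [abs_of_nonpos (by linarith : x - y ≤ 0), abs_of_nonpos (by linarith : x ≤ 0)]
          linarith
      _ = ENNReal.ofReal (|x| ^ p) := by rw [lintegral_const, measure_univ, mul_one]
  have hc3 : ∫⁻ q, ENNReal.ofReal (|q.1 - q.2| ^ p) ∂((μ.restrict (Ioi b)).prod νR)
      ≤ ∫⁻ x in Ioi b, ENNReal.ofReal (|x| ^ p) ∂μ := by
    rw [lintegral_prod _ hfmeas.aemeasurable]
    refine lintegral_mono_ae ?_
    filter_upwards [ae_restrict_mem measurableSet_Ioi] with x hx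
    have hx0 : b < x := hx
    calc ∫⁻ y, ENNReal.ofReal (|x - y| ^ p) ∂νR
        ≤ ∫⁻ _, ENNReal.ofReal (|x| ^ p) ∂νR := by
          refine lintegral_mono_ae ?_
          have hy : ∀ᵐ y ∂νR, y ∈ Icc (0:ℝ) b := by
            rw [hνRdef]
            exact Measure.ae_smul_measure (ae_restrict_mem measurableSet_Icc) _
          filter_upwards [hy] with y hy
          refine ENNReal.ofReal_le_ofReal (Real.rpow_le_rpow (abs_nonneg _) ?_ hp0.le)
          obtain ⟨hy1, hy2⟩ := hy
          rw [abs_of_nonneg (by linarith : (0:ℝ) ≤ x - y), abs_of_nonneg (by linarith : (0:ℝ) ≤ x)]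
          linarith
      _ = ENNReal.ofReal (|x| ^ p) := by rw [lintegral_const, measure_univ, mul_one]
  -- split the right-hand side
  have hcompl : (Icc a b)ᶜ = Iio a ∪ Ioi b := by
    ext x
    simp only [mem_compl_iff, mem_Icc, not_and_or, not_le, mem_union, mem_Iio, mem_Ioi]
  have hdisj : Disjoint (Iio a) (Ioi b) := by
    rw [Set.disjoint_left]
    intro x hx hx'
    simp only [mem_Iio] at hx
    simp only [mem_Ioi] at hx'
    linarith
  have hsplit : ∫⁻ x in (Icc a b)ᶜ, ENNReal.ofReal (|x| ^ p) ∂μ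
      = (∫⁻ x in Iio a, ENNReal.ofReal (|x| ^ p) ∂μ)
        + ∫⁻ x in Ioi b, ENNReal.ofReal (|x| ^ p) ∂μ := by
    rw [hcompl, lintegral_union measurableSet_Ioi hdisj]
  -- conclude
  refine le_trans (sInf_le ⟨π, hπprob, hfst, hsnd, rfl⟩) ?_
  rw [hπdef, lintegral_add_measure, lintegral_add_measure, hc1, zero_add, hsplit]
  exact add_le_add hc2 hc3
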